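/- If α is an action of depth k, then for any k'-olt s^{k'} with k' ≥ k, the progress function g_{α,s^{k'}} is k-bounded: it maps every node of depth ≤ k to a node of depth ≤ k, and fixes every node of depth > k. -/

import Mathlib

noncomputable section

inductive Form (Φ : Type) : Type where
  | tru : Form Φ
  | fls : Form Φ
  | var : Φ → Form Φ
  | neg : Form Φ → Form Φ
  | and : Form Φ → Form Φ → Form Φ
  | or : Form Φ → Form Φ → Form Φ
deriving DecidableEq

namespace Form
def eval {Φ : Type} (v : Φ → Bool) : Form Φ → Bool
  | tru => true
  | fls => false
  | var p => v p
  | neg φ => !(φ.eval v)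
  | and φ ψ => φ.eval v && ψ.eval v
  | or φ ψ => φ.eval v || ψ.eval v

def Valid {Φ : Type} (φ : Form Φ) : Prop := ∀ v, φ.eval v = true
def Equiv {Φ : Type} (φ ψ : Form Φ) : Prop := ∀ v, φ.eval v = ψ.eval v
def imp {Φ : Type} (φ ψ : Form Φ) : Form Φ := .or (.neg φ) ψ
end Form

section Atoms
variable {Φ : Type} [Fintype Φ] [DecidableEq Φ]

def bigAnd {Φ : Type} (l : List (Form Φ)) : Form Φ := l.foldr .and .tru
def bigOr {Φ : Type} (l : List (Form Φ)) : Form Φ := l.foldr .or .fls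

/-- The atom `φ_a` for `a ⊆ Φ`. -/
def atomForm (a : Finset Φ) : Form Φ :=
  .and (bigAnd ((Finset.univ.filter (· ∈ a)).toList.map .var))
       (bigAnd ((Finset.univ.filter (· ∉ a)).toList.map (fun p => .neg (.var p))))

/-- `φ_A`, the disjunction of the atoms in `A`. -/
def disjForm (A : Finset (Finset Φ)) : Form Φ := bigOr (A.toList.map atomForm)

/-- The valuation corresponding to an atom. -/
def atomVal (a : Finset Φ) : Φ → Bool := fun p => p ∈ a

/-- The set of atoms whose disjunction is equivalent to `φ`. -/
def canonSet (φ : Form Φ) : Finset (Finset Φ) :=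
  Finset.univ.filter (fun a => φ.eval (atomVal a) = true)

end Atoms

inductive Act (Φ : Type) : Type where
  | noop : Act Φ
  | doa : Form Φ → Act Φ
  | ite : Form Φ → Act Φ → Act Φ → Act Φ
  | seq : Act Φ → Act Φ → Act Φ
deriving DecidableEq

/-- `HasDepth α k`: α is a depth-`k` action. -/
inductive HasDepth {Φ : Type} : Act Φ → ℕ → Prop where
  | noop : HasDepth .noop 0
  | up {α k} : HasDepth α k → HasDepth α (k+1)
  | prim {φ} : HasDepth (.doa φ) 1
  | cond {ψ α β k} : HasDepth α (k+1) → HasDepth β (k+1) → HasDepth (.ite ψ α β) (k+1)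
  | seq {α β k₁ k₂ m} : HasDepth α k₁ → HasDepth β k₂ → k₁ + k₂ ≤ m → 2 ≤ m →
      HasDepth (.seq α β) m

section Canonical
variable {Φ : Type} [Fintype Φ] [DecidableEq Φ]

/-- A fixed enumeration `a₁, …, a_N` of the atoms. -/
def atomList (Φ : Type) [Fintype Φ] [DecidableEq Φ] : List (Finset Φ) :=
  (Finset.univ : Finset (Finset Φ)).toList

/-- The nested conditional `if φ_{a₁} then c(a₁) else (… else c(a_N))`,
with trailing `noop`s trimmed. -/
def nestIf (c : Finset Φ → Act Φ) : List (Finset Φ) → Act Φ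
  | [] => .noop
  | a :: rest =>
    let r := nestIf c rest
    if c a = .noop ∧ r = .noop then .noop else .ite (atomForm a) (c a) r

/-- The canonical action determined by a canonical map `c`. -/
def gammaOf (c : Finset Φ → Act Φ) : Act Φ := nestIf c (atomList Φ)

def fuelOf {Φ : Type} : Act Φ → ℕ
  | .noop => 1
  | .doa _ => 1
  | .ite _ α β => max (fuelOf α) (fuelOf β)
  | .seq α β => fuelOf α + fuelOf β

/-- Fueled canonical map. -/
def cmapF : ℕ → Act Φ → Finset Φ → Act Φ
  | _, .noop, _ => .noop
  | _, .doa φ, _ => .doa (disjForm (canonSet φ))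
  | n, .ite ψ α β, a => if ψ.eval (atomVal a) = true then cmapF n α a else cmapF n β a
  | 0, .seq _ _, _ => .noop
  | (n+1), .seq α β, a =>
    match cmapF (n+1) α a with
    | .noop => cmapF (n+1) β a
    | .doa ψ => .seq (.doa ψ) (gammaOf (fun b => cmapF n β b))
    | .seq (.doa ψ) γ => .seq (.doa ψ) (gammaOf (fun b => cmapF n (.seq γ β) b))
    | _ => .noop
  termination_by n α _ => (n, sizeOf α)

/-- The canonical map `c_α`. -/
def cmap (α : Act Φ) : Finset Φ → Act Φ := cmapF (fuelOf α) α

/-- The canonical action `γ_α`. -/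
def gammaAct (α : Act Φ) : Act Φ := gammaOf (cmap α)

/-- `F̃ = {φ_A : ∃ φ ∈ F, ⊨ φ_A ↔ φ}`. -/
def FTilde (F : Finset (Form Φ)) : Set (Form Φ) :=
  {ψ | ∃ A : Finset (Finset Φ), ψ = disjForm A ∧ ∃ φ ∈ F, Form.Equiv (disjForm A) φ}

/-- `CA^{k,-}`: depth-`k` actions of the form `noop`, `do(φ_A)`, or `do(φ_A);γ_β`. -/
def CAminus (F : Finset (Form Φ)) (k : ℕ) : Set (Act Φ) :=
  {α | HasDepth α k ∧
    (α = .noop ∨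
     (∃ A : Finset (Finset Φ), α = .doa (disjForm A) ∧ disjForm A ∈ FTilde F) ∨
     (∃ (A : Finset (Finset Φ)) (β : Act Φ),
        α = .seq (.doa (disjForm A)) (gammaAct β) ∧ disjForm A ∈ FTilde F ∧
        HasDepth β (k-1)))}

end Canonical

section Olt
variable {Φ : Type} [Fintype Φ] [DecidableEq Φ]

/-- An (unbounded) ordered labeled tree: a root atom, plus for each node
(identified with its path from the root) a total order (ranking) of its
`N` children, which are labeled by the `N` atoms. -/
structure Olt (Φ : Type) [Fintype Φ] [DecidableEq Φ] where
  root : Finset Φ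
  ord : List (Finset Φ) → (Finset Φ ≃ Fin (Fintype.card (Finset Φ)))

/-- The closest (minimal) child of node `p` whose label lies in `A`. -/
noncomputable def minChild (s : Olt Φ) (p : List (Finset Φ)) (A : Finset (Finset Φ)) :
    Finset Φ :=
  if h : A.Nonempty then (s.ord p).symm ((A.image (s.ord p)).min' (h.image _)) else ∅

/-- The subtree rooted at the child of the root labeled `b`. -/
def subtree (s : Olt Φ) (b : Finset Φ) : Olt Φ :=
  ⟨b, fun p => s.ord (b :: p)⟩

/-- The progress function `g_{α,s}` (with fuel `k`), mapping each node of `s`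
to a descendant. -/
noncomputable def gfun : ℕ → Act Φ → Olt Φ → List (Finset Φ) → List (Finset Φ)
  | 0, _, _, t => t
  | (k+1), α, s, t =>
    match cmap α s.root with
    | .noop => t
    | .doa φ => if t = [] then [minChild s [] (canonSet φ)] else t
    | .seq (.doa φ) γ =>
      match t with
      | [] =>
        let t' := minChild s [] (canonSet φ)
        t' :: gfun k γ (subtree s t') []
      | b :: rest => b :: gfun k γ (subtree s b) rest
    | _ => t

end Olt

section GfunAux
variable {Φ : Type} [Fintype Φ] [DecidableEq Φ]

/-- Canonical-shape predicate. -/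
def CShape : ℕ → Act Φ → Prop
  | 0, o => o = .noop
  | (k+1), o => match o with
    | .noop => True
    | .doa _ => True
    | .seq (.doa _) γ => ∀ n b, CShape k (cmapF n γ b)
    | _ => False

@[simp] lemma cshape_noop (k : ℕ) : CShape (Φ := Φ) k .noop := by
  cases k <;> simp [CShape]

lemma cshape_mono : ∀ (k : ℕ) (o : Act Φ), CShape k o → CShape (k+1) o
  | 0, o, h => by subst h; simp [CShape]
  | (k+1), o, h => by
    cases o with
    | noop => simp [CShape]
    | doa φ => simp [CShape]
    | ite ψ α β => simp [CShape] at h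
    | seq a b =>
      cases a with
      | doa φ =>
        simp only [CShape] at h ⊢
        exact fun n c => cshape_mono k _ (h n c)
      | noop => simp [CShape] at h
      | ite ψ α β => simp [CShape] at h
      | seq x y => simp [CShape] at h

lemma cshape_mono_le {k m : ℕ} (h : k ≤ m) {o : Act Φ} (ho : CShape k o) :
    CShape m o := by
  induction h with
  | refl => exact ho
  | step _ ih => exact cshape_mono _ _ ih

lemma bigAnd_eval (v : Φ → Bool) (l : List (Form Φ)) :
    (bigAnd l).eval v = true ↔ ∀ φ ∈ l, φ.eval v = true := by
  induction l with
  | nil => simp [bigAnd, Form.eval]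
  | cons φ l ih => simp [bigAnd, Form.eval, Bool.and_eq_true] at ih ⊢; tauto

lemma atomForm_eval (a b : Finset Φ) :
    ((atomForm a).eval (atomVal b) = true) ↔ a = b := by
  simp only [atomForm, Form.eval, Bool.and_eq_true, bigAnd_eval]
  constructor
  · rintro ⟨h1, h2⟩
    ext p
    constructor
    · intro hp
      have := h1 (.var p) (by
        simp only [List.mem_map, Finset.mem_toList, Finset.mem_filter]
        exact ⟨p, ⟨Finset.mem_univ p, hp⟩, rfl⟩)
      simpa [Form.eval, atomVal] using this
    · intro hp
      by_contra hpa
      have := h2 (.neg (.var p)) (by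
        simp only [List.mem_map, Finset.mem_toList, Finset.mem_filter]
        exact ⟨p, ⟨Finset.mem_univ p, hpa⟩, rfl⟩)
      simp [Form.eval, atomVal, hp] at this
  · rintro rfl
    constructor
    · intro φ hφ
      simp only [List.mem_map, Finset.mem_toList, Finset.mem_filter] at hφ
      obtain ⟨p, ⟨-, hp⟩, rfl⟩ := hφ
      simpa [Form.eval, atomVal] using hp
    · intro φ hφ
      simp only [List.mem_map, Finset.mem_toList, Finset.mem_filter] at hφ
      obtain ⟨p, ⟨-, hp⟩, rfl⟩ := hφ
      simpa [Form.eval, atomVal] using hp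

@[simp] lemma cmapF_noop (N : ℕ) (b : Finset Φ) : cmapF N .noop b = .noop := by
  rw [cmapF.eq_def]

@[simp] lemma cmapF_doa (N : ℕ) (φ : Form Φ) (b : Finset Φ) :
    cmapF N (.doa φ) b = .doa (disjForm (canonSet φ)) := by
  rw [cmapF.eq_def]

lemma cmapF_ite (N : ℕ) (ψ : Form Φ) (α β : Act Φ) (b : Finset Φ) :
    cmapF N (.ite ψ α β) b =
      if ψ.eval (atomVal b) = true then cmapF N α b else cmapF N β b := by
  rw [cmapF.eq_def]

lemma cmapF_seq (N : ℕ) (α β : Act Φ) (b : Finset Φ) :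
    cmapF (N+1) (.seq α β) b =
      match cmapF (N+1) α b with
      | .noop => cmapF (N+1) β b
      | .doa ψ => .seq (.doa ψ) (gammaOf (fun c => cmapF N β c))
      | .seq (.doa ψ) γ => .seq (.doa ψ) (gammaOf (fun c => cmapF N (.seq γ β) c))
      | _ => .noop := by
  rw [cmapF.eq_def]

lemma cmapF_nestIf (c : Finset Φ → Act Φ) (N : ℕ) (b : Finset Φ) :
    ∀ l : List (Finset Φ), b ∈ l → cmapF N (nestIf c l) b = cmapF N (c b) b := by
  intro l
  induction l with
  | nil => intro h; simp at h
  | cons a rest ih =>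
    intro hb
    simp only [nestIf]
    split
    · next h =>
      rcases List.mem_cons.mp hb with rfl | hb'
      · rw [h.1]
      · rw [cmapF_noop, ← ih hb', h.2, cmapF_noop]
    · next h =>
      rw [cmapF_ite]
      rcases List.mem_cons.mp hb with rfl | hb'
      · rw [if_pos ((atomForm_eval b b).mpr rfl)]
      · by_cases hab : a = b
        · subst hab
          rw [if_pos ((atomForm_eval a a).mpr rfl)]
        · rw [if_neg (fun hh => hab ((atomForm_eval a b).mp hh))]
          exact ih hb'

lemma cmapF_gammaOf (c : Finset Φ → Act Φ) (N : ℕ) (b : Finset Φ) :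
    cmapF N (gammaOf c) b = cmapF N (c b) b :=
  cmapF_nestIf c N b _ (by simp [atomList])

lemma cshape_stab : ∀ (j : ℕ) (o : Act Φ), CShape j o → ∀ (n : ℕ) (b : Finset Φ),
    CShape j (cmapF n o b)
  | 0, o, h, n, b => by subst h; simp
  | (j+1), o, h, n, b => by
    cases o with
    | noop => simp
    | doa φ => simp [CShape]
    | ite ψ α β => simp [CShape] at h
    | seq a γ =>
      cases a with
      | doa ψ =>
        simp only [CShape] at h
        cases n with
        | zero => rw [cmapF.eq_def]; simp
        | succ n =>
          rw [cmapF_seq, cmapF_doa]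
          simp only [CShape]
          intro n' b'
          rw [cmapF_gammaOf]
          exact cshape_stab j _ (h n b') n' b'
      | noop => simp [CShape] at h
      | ite ψ α β => simp [CShape] at h
      | seq x y => simp [CShape] at h

lemma cshape_doa_pos {p : ℕ} {ψ : Form Φ} (h : CShape p (Act.doa ψ)) :
    ∃ p', p = p' + 1 := by
  cases p with
  | zero => simp [CShape] at h
  | succ p' => exact ⟨p', rfl⟩

lemma cshape_seq_comp : ∀ (p q : ℕ) (γ β : Act Φ),
    (∀ n b, CShape p (cmapF n γ b)) → (∀ n b, CShape q (cmapF n β b)) →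
    ∀ n b, CShape (p + q) (cmapF n (.seq γ β) b) := by
  intro p
  induction p with
  | zero =>
    intro q γ β hγ hβ n b
    -- cmapF n γ b = noop always
    cases n with
    | zero => rw [cmapF.eq_def]; simp
    | succ n =>
      rw [cmapF_seq]
      have h0 := hγ (n+1) b
      simp only [CShape] at h0
      rw [h0]
      simpa using hβ (n+1) b
  | succ p' ih =>
    intro q γ β hγ hβ n b
    cases n with
    | zero => rw [cmapF.eq_def]; simp
    | succ n =>
      rw [cmapF_seq]
      have hg := hγ (n+1) b
      cases hc : cmapF (n+1) γ b with
      | noop => exact cshape_mono_le (by omega) (hβ (n+1) b)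
      | doa ψ =>
        show CShape (p' + 1 + q) (.seq (.doa ψ) _)
        have : p' + 1 + q = (p' + q) + 1 := by omega
        rw [this]
        simp only [CShape]
        intro n' b'
        rw [cmapF_gammaOf]
        exact cshape_stab _ _ (cshape_mono_le (by omega) (hβ n b')) n' b'
      | ite ψ x y => rw [hc] at hg; simp [CShape] at hg
      | seq x y =>
        rw [hc] at hg
        cases x with
        | doa ψ =>
          simp only [CShape] at hg
          show CShape (p' + 1 + q) (.seq (.doa ψ) _)
          have : p' + 1 + q = (p' + q) + 1 := by omega
          rw [this]
          simp only [CShape]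
          intro n' b'
          rw [cmapF_gammaOf]
          exact cshape_stab _ _ (ih q y β hg hβ n b') n' b'
        | noop => simp [CShape] at hg
        | ite ψ u v => simp [CShape] at hg
        | seq u v => simp [CShape] at hg

lemma cshape_of_depth {α : Act Φ} {k : ℕ} (hd : HasDepth α k) :
    ∀ (n : ℕ) (a : Finset Φ), CShape k (cmapF n α a) := by
  induction hd with
  | noop => intro n a; simp
  | up _ ih => exact fun n a => cshape_mono _ _ (ih n a)
  | prim => intro n a; simp [CShape]
  | cond _ _ ihα ihβ =>
    intro n a
    rw [cmapF_ite]
    split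
    · exact ihα n a
    · exact ihβ n a
  | @seq α β k₁ k₂ m _ _ hle h2 ihα ihβ =>
    intro n a
    cases n with
    | zero => rw [cmapF.eq_def]; simp
    | succ n =>
      rw [cmapF_seq]
      obtain ⟨m', rfl⟩ : ∃ m', m = m' + 1 := ⟨m - 1, by omega⟩
      have hga := ihα (n+1) a
      cases hc : cmapF (n+1) α a with
      | noop => exact cshape_mono_le (by omega) (ihβ (n+1) a)
      | doa ψ =>
        rw [hc] at hga
        obtain ⟨k₁', rfl⟩ := cshape_doa_pos hga
        show CShape (m' + 1) (.seq (.doa ψ) _)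
        simp only [CShape]
        intro n' b'
        rw [cmapF_gammaOf]
        exact cshape_stab _ _ (cshape_mono_le (by omega) (ihβ n b')) n' b'
      | ite ψ x y => rw [hc] at hga; cases k₁ <;> simp [CShape] at hga
      | seq x y =>
        rw [hc] at hga
        cases x with
        | doa ψ =>
          obtain ⟨k₁', rfl⟩ : ∃ k₁', k₁ = k₁' + 1 := by
            cases k₁ with
            | zero => simp [CShape] at hga
            | succ j => exact ⟨j, rfl⟩
          simp only [CShape] at hga
          show CShape (m' + 1) (.seq (.doa ψ) _)
          simp only [CShape]
          intro n' b'
          rw [cmapF_gammaOf]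
          have := cshape_seq_comp k₁' k₂ y β hga ihβ n b'
          exact cshape_stab _ _ (cshape_mono_le (by omega) this) n' b'
        | noop => cases k₁ <;> simp [CShape] at hga
        | ite ψ u v => cases k₁ <;> simp [CShape] at hga
        | seq u v => cases k₁ <;> simp [CShape] at hga

lemma gfun_succ (k : ℕ) (α : Act Φ) (s : Olt Φ) (t : List (Finset Φ)) :
    gfun (k+1) α s t =
      match cmap α s.root with
      | .noop => t
      | .doa φ => if t = [] then [minChild s [] (canonSet φ)] else t
      | .seq (.doa φ) γ =>
        (match t with
         | [] => minChild s [] (canonSet φ) ::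
             gfun k γ (subtree s (minChild s [] (canonSet φ))) []
         | b :: rest => b :: gfun k γ (subtree s b) rest)
      | _ => t := by
  rw [gfun.eq_def]

lemma gfun_main : ∀ (k' k : ℕ) (α : Act Φ) (s : Olt Φ) (t : List (Finset Φ)),
    CShape k (cmap α s.root) →
    (t.length ≤ k → (gfun k' α s t).length ≤ k) ∧
    (k < t.length → gfun k' α s t = t) := by
  intro k'
  induction k' with
  | zero => intro k α s t h; rw [gfun.eq_def]; simp
  | succ k' ih =>
    intro k α s t h
    rw [gfun_succ]
    cases hc : cmap α s.root with
    | noop => simp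
    | doa φ =>
      rw [hc] at h
      obtain ⟨k0, rfl⟩ := cshape_doa_pos h
      simp only []
      constructor
      · intro ht
        split
        · simp
        · exact ht
      · intro ht
        rw [if_neg]
        intro he
        rw [he] at ht
        simp at ht
    | ite ψ x y => simp
    | seq a γ =>
      cases a with
      | doa φ =>
        rw [hc] at h
        obtain ⟨m, rfl⟩ : ∃ m, k = m + 1 := by
          cases k with
          | zero => simp [CShape] at h
          | succ j => exact ⟨j, rfl⟩
        simp only [CShape] at h
        cases t with
        | nil =>
          simp only [List.length_nil]
          constructor
          · intro _
            simp only [List.length_cons]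
            have := (ih m γ (subtree s (minChild s [] (canonSet φ))) []
              (h (fuelOf γ) _)).1 (by simp)
            omega
          · intro ht; omega
        | cons b rest =>
          have hsub := ih m γ (subtree s b) rest (h (fuelOf γ) _)
          simp only [List.length_cons]
          constructor
          · intro ht
            have := hsub.1 (by omega)
            omega
          · intro ht
            rw [hsub.2 (by omega)]
      | noop => simp
      | ite ψ u v => simp
      | seq u v => simp

end GfunAux

/-- If `α` has depth `k`, then `g_{α,s}` is `k`-bounded: nodes of depth `≤ k`
are mapped to nodes of depth `≤ k`, and nodes of depth `> k` are fixed. -/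
theorem gfun_bounded {Φ : Type} [Fintype Φ] [DecidableEq Φ]
    (k k' : ℕ) (α : Act Φ) (s : Olt Φ) (hd : HasDepth α k) (hk : k ≤ k')
    (t : List (Finset Φ)) :
    (t.length ≤ k → (gfun k' α s t).length ≤ k) ∧
    (k < t.length → gfun k' α s t = t) :=
  gfun_main k' k α s t (cshape_of_depth hd (fuelOf α) s.root)

end
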